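/- Under Assumptions 1 and 2, if x : ℝ → ℝⁿ is a differentiable trajectory satisfying ẋ(t) = F(x(t),t) with F(x,t) := −[∇ₓₓ f(x;t)]⁻¹ ∇_{tx} f(x;t), then the total time derivative of F along the trajectory is bounded: ‖(d/dt) F(x(t),t)‖ ≤ C₀²C₁/m³ + 2C₀C₂/m² + C₃/m for all t. -/

import Mathlib

noncomputable section


section helpers

variable {E : Type*} [NormedAddCommGroup E] [NormedSpace ℝ E]
variable {F : Type*} [NormedAddCommGroup F] [NormedSpace ℝ F]

/-- If a function has a derivative at `t` and satisfies a pointwise slope bound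
around `t`, the derivative's norm is bounded. -/
lemma norm_deriv_le_of_slope_bound {φ : ℝ → E} {d : E} {t K : ℝ}
    (hd : HasDerivAt φ d t) (h : ∀ s, ‖φ s - φ t‖ ≤ K * |s - t|) : ‖d‖ ≤ K := by
  rw [hasDerivAt_iff_tendsto_slope] at hd
  refine le_of_tendsto (hd.norm) ?_
  filter_upwards [self_mem_nhdsWithin] with s hs
  have hst : s ≠ t := hs
  have habs : |s - t| ≠ 0 := by
    simp [sub_eq_zero, hst]
  have : ‖slope φ t s‖ = |s - t|⁻¹ * ‖φ s - φ t‖ := by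
    rw [slope_def_module, norm_smul]
    simp [abs_sub_comm]
  rw [this]
  calc |s - t|⁻¹ * ‖φ s - φ t‖ ≤ |s - t|⁻¹ * (K * |s - t|) :=
        mul_le_mul_of_nonneg_left (h s) (by positivity)
    _ = K := by field_simp

/-- A function `ℝ → E` with derivative bounded by `C` is `C`-Lipschitz. -/
lemma lip_of_deriv {φ φ' : ℝ → E} {C : ℝ}
    (h : ∀ s, HasDerivAt φ (φ' s) s) (hb : ∀ s, ‖φ' s‖ ≤ C) (a b : ℝ) :
    ‖φ b - φ a‖ ≤ C * |b - a| := by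
  have := Convex.norm_image_sub_le_of_norm_hasDerivWithin_le
    (fun s (_ : s ∈ (Set.univ : Set ℝ)) => (h s).hasDerivWithinAt)
    (fun s _ => hb s) convex_univ (Set.mem_univ a) (Set.mem_univ b)
  simpa [Real.norm_eq_abs] using this

/-- A function `E → F` with Fréchet derivative bounded by `C` is `C`-Lipschitz. -/
lemma lip_of_fderiv {φ : E → F} {φ' : E → E →L[ℝ] F} {C : ℝ}
    (h : ∀ z, HasFDerivAt φ (φ' z) z) (hb : ∀ z, ‖φ' z‖ ≤ C) (a b : E) :
    ‖φ b - φ a‖ ≤ C * ‖b - a‖ :=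
  Convex.norm_image_sub_le_of_norm_hasFDerivWithin_le
    (fun z (_ : z ∈ (Set.univ : Set E)) => (h z).hasFDerivWithinAt)
    (fun z _ => hb z) convex_univ (Set.mem_univ a) (Set.mem_univ b)

end helpers


/-- The setting of a time-varying, smooth, strongly convex optimization problem
`min_{x ∈ ℝⁿ} f(x;t)`, bundling the objective `f`, its derivatives, the Hessian
inverse, the optimal trajectory `x*(t)`, and Assumptions 1 and 2 of the paper. -/
structure TVOpt (n : ℕ) where
  /-- the objective `f(x;t)` -/
  f : EuclideanSpace ℝ (Fin n) → ℝ → ℝ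
  /-- the gradient `∇ₓ f(x;t)` -/
  grad : EuclideanSpace ℝ (Fin n) → ℝ → EuclideanSpace ℝ (Fin n)
  /-- the Hessian `∇ₓₓ f(x;t)` -/
  hess : EuclideanSpace ℝ (Fin n) → ℝ →
    EuclideanSpace ℝ (Fin n) →L[ℝ] EuclideanSpace ℝ (Fin n)
  /-- the Hessian inverse `[∇ₓₓ f(x;t)]⁻¹` -/
  hessInv : EuclideanSpace ℝ (Fin n) → ℝ →
    EuclideanSpace ℝ (Fin n) →L[ℝ] EuclideanSpace ℝ (Fin n)
  /-- the mixed partial derivative `∇_{tx} f(x;t)` -/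
  dtgrad : EuclideanSpace ℝ (Fin n) → ℝ → EuclideanSpace ℝ (Fin n)
  /-- the third derivative tensor `∇ₓₓₓ f(x;t)` -/
  d3 : EuclideanSpace ℝ (Fin n) → ℝ →
    EuclideanSpace ℝ (Fin n) →L[ℝ] EuclideanSpace ℝ (Fin n) →L[ℝ] EuclideanSpace ℝ (Fin n)
  /-- the time derivative of the Hessian `∇_{xtx} f(x;t)` -/
  dthess : EuclideanSpace ℝ (Fin n) → ℝ →
    EuclideanSpace ℝ (Fin n) →L[ℝ] EuclideanSpace ℝ (Fin n)
  /-- the second time derivative of the gradient `∇_{ttx} f(x;t)` -/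
  dttgrad : EuclideanSpace ℝ (Fin n) → ℝ → EuclideanSpace ℝ (Fin n)
  /-- the optimal trajectory `x*(t)` -/
  xstar : ℝ → EuclideanSpace ℝ (Fin n)
  /-- strong convexity constant -/
  m : ℝ
  /-- Hessian norm bound (gradient Lipschitz constant) -/
  L : ℝ
  C0 : ℝ
  C1 : ℝ
  C2 : ℝ
  C3 : ℝ
  m_pos : 0 < m
  grad_spec : ∀ (x : EuclideanSpace ℝ (Fin n)) (t : ℝ), HasGradientAt (fun y => f y t) (grad x t) x
  hess_spec : ∀ (x : EuclideanSpace ℝ (Fin n)) (t : ℝ), HasFDerivAt (fun y => grad y t) (hess x t) x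
  dtgrad_spec : ∀ (x : EuclideanSpace ℝ (Fin n)) (t : ℝ), HasDerivAt (fun s => grad x s) (dtgrad x t) t
  d3_spec : ∀ (x : EuclideanSpace ℝ (Fin n)) (t : ℝ), HasFDerivAt (fun y => hess y t) (d3 x t) x
  dthess_spec : ∀ (x : EuclideanSpace ℝ (Fin n)) (t : ℝ), HasDerivAt (fun s => hess x s) (dthess x t) t
  dttgrad_spec : ∀ (x : EuclideanSpace ℝ (Fin n)) (t : ℝ), HasDerivAt (fun s => dtgrad x s) (dttgrad x t) t
  /-- Assumption 1: `∇ₓₓ f(x;t) ⪰ m·I` uniformly in `x` and `t`. -/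
  strong_convex : ∀ (x : EuclideanSpace ℝ (Fin n)) (t : ℝ) (v : EuclideanSpace ℝ (Fin n)),
    m * ‖v‖ ^ 2 ≤ @inner ℝ _ _ v (hess x t v)
  hessInv_left : ∀ (x : EuclideanSpace ℝ (Fin n)) (t : ℝ), ContinuousLinearMap.comp (hessInv x t) (hess x t) =
    ContinuousLinearMap.id ℝ (EuclideanSpace ℝ (Fin n))
  hessInv_right : ∀ (x : EuclideanSpace ℝ (Fin n)) (t : ℝ), ContinuousLinearMap.comp (hess x t) (hessInv x t) =
    ContinuousLinearMap.id ℝ (EuclideanSpace ℝ (Fin n))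
  /-- Assumption 2: bounded derivatives, uniformly in `x` and `t`. -/
  hess_bound : ∀ (x : EuclideanSpace ℝ (Fin n)) (t : ℝ), ‖hess x t‖ ≤ L
  dtgrad_bound : ∀ (x : EuclideanSpace ℝ (Fin n)) (t : ℝ), ‖dtgrad x t‖ ≤ C0
  d3_bound : ∀ (x : EuclideanSpace ℝ (Fin n)) (t : ℝ), ‖d3 x t‖ ≤ C1
  dthess_bound : ∀ (x : EuclideanSpace ℝ (Fin n)) (t : ℝ), ‖dthess x t‖ ≤ C2
  dttgrad_bound : ∀ (x : EuclideanSpace ℝ (Fin n)) (t : ℝ), ‖dttgrad x t‖ ≤ C3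
  /-- `x*(t)` minimizes `f(·;t)` -/
  xstar_min : ∀ t : ℝ, IsMinOn (fun x => f x t) Set.univ (xstar t)
  /-- equivalently, `∇ₓ f(x*(t);t) = 0` -/
  xstar_grad : ∀ t : ℝ, grad (xstar t) t = 0

/-- Along any trajectory of the continuous dynamics
`ẋ(t) = F(x(t),t)` with `F(x,t) = −[∇ₓₓ f(x;t)]⁻¹ ∇_tx f(x;t)`, the total time
derivative of `F` is bounded by `C₀²C₁/m³ + 2C₀C₂/m² + C₃/m`. -/
theorem prediction_direction_derivative_bound (n : ℕ) (P : TVOpt n)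
    (x : ℝ → EuclideanSpace ℝ (Fin n))
    (hode : ∀ t : ℝ, HasDerivAt x (-(P.hessInv (x t) t (P.dtgrad (x t) t))) t) :
    ∀ (t : ℝ) (F' : EuclideanSpace ℝ (Fin n)),
      HasDerivAt (fun s => -(P.hessInv (x s) s (P.dtgrad (x s) s))) F' t →
      ‖F'‖ ≤ P.C0 ^ 2 * P.C1 / P.m ^ 3 + 2 * P.C0 * P.C2 / P.m ^ 2 + P.C3 / P.m := by
  intro t F' hF'
  have hm : 0 < P.m := P.m_pos
  have hC0 : 0 ≤ P.C0 := le_trans (norm_nonneg _) (P.dtgrad_bound 0 0)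
  have hC1 : 0 ≤ P.C1 := le_trans (ContinuousLinearMap.opNorm_nonneg _) (P.d3_bound 0 0)
  have hC2 : 0 ≤ P.C2 := le_trans (ContinuousLinearMap.opNorm_nonneg _) (P.dthess_bound 0 0)
  have hC3 : 0 ≤ P.C3 := le_trans (norm_nonneg _) (P.dttgrad_bound 0 0)
  -- the Hessian inverse is bounded by `1/m`
  have hInv : ∀ (z : EuclideanSpace ℝ (Fin n)) (s : ℝ) (v : EuclideanSpace ℝ (Fin n)),
      ‖P.hessInv z s v‖ ≤ (1 / P.m) * ‖v‖ := by
    intro z s v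
    set w := P.hessInv z s v with hw
    have hwv : P.hess z s w = v := by
      have h := P.hessInv_right z s
      calc P.hess z s w = (P.hess z s).comp (P.hessInv z s) v := rfl
        _ = v := by rw [h]; rfl
    have h1 : P.m * ‖w‖ ^ 2 ≤ inner ℝ w (P.hess z s w) := P.strong_convex z s w
    have h2 : (inner ℝ w (P.hess z s w) : ℝ) ≤ ‖w‖ * ‖P.hess z s w‖ := real_inner_le_norm _ _
    rw [hwv] at h1 h2
    rcases eq_or_lt_of_le (norm_nonneg w) with h0 | h0
    · rw [← h0]; positivity
    · have hle : ‖w‖ ≤ ‖v‖ / P.m := by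
        rw [le_div_iff₀ hm]; nlinarith [h1, h2, h0]
      calc ‖w‖ ≤ ‖v‖ / P.m := hle
        _ = (1 / P.m) * ‖v‖ := by ring
  -- Lipschitz continuity of the Hessian in x and t
  have hess_lip_x : ∀ (s : ℝ) (a b : EuclideanSpace ℝ (Fin n)),
      ‖P.hess b s - P.hess a s‖ ≤ P.C1 * ‖b - a‖ :=
    fun s a b => lip_of_fderiv (fun z => P.d3_spec z s) (fun z => P.d3_bound z s) a b
  have hess_lip_t : ∀ (z : EuclideanSpace ℝ (Fin n)) (a b : ℝ),
      ‖P.hess z b - P.hess z a‖ ≤ P.C2 * |b - a| :=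
    fun z a b => lip_of_deriv (fun s => P.dthess_spec z s) (fun s => P.dthess_bound z s) a b
  -- Lipschitz continuity of `dtgrad` in t
  have dtgrad_lip_t : ∀ (z : EuclideanSpace ℝ (Fin n)) (a b : ℝ),
      ‖P.dtgrad z b - P.dtgrad z a‖ ≤ P.C3 * |b - a| :=
    fun z a b => lip_of_deriv (fun s => P.dttgrad_spec z s) (fun s => P.dttgrad_bound z s) a b
  -- Lipschitz continuity of `dtgrad` in x, with constant C2 (a Schwarz-type estimate)
  have dtgrad_lip_x : ∀ (τ : ℝ) (a b : EuclideanSpace ℝ (Fin n)),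
      ‖P.dtgrad b τ - P.dtgrad a τ‖ ≤ P.C2 * ‖b - a‖ := by
    intro τ a b
    refine norm_deriv_le_of_slope_bound (φ := fun s => P.grad b s - P.grad a s)
      ((P.dtgrad_spec b τ).sub (P.dtgrad_spec a τ)) ?_
    intro s
    have key : ∀ z : EuclideanSpace ℝ (Fin n),
        HasFDerivAt (fun w => P.grad w s - P.grad w τ) (P.hess z s - P.hess z τ) z :=
      fun z => (P.hess_spec z s).sub (P.hess_spec z τ)
    have hb : ∀ z : EuclideanSpace ℝ (Fin n), ‖P.hess z s - P.hess z τ‖ ≤ P.C2 * |s - τ| :=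
      fun z => hess_lip_t z τ s
    have hlip := lip_of_fderiv key hb a b
    have heq : (P.grad b s - P.grad b τ) - (P.grad a s - P.grad a τ)
        = (P.grad b s - P.grad a s) - (P.grad b τ - P.grad a τ) := by abel
    rw [heq] at hlip
    calc ‖(P.grad b s - P.grad a s) - (P.grad b τ - P.grad a τ)‖
        ≤ P.C2 * |s - τ| * ‖b - a‖ := hlip
      _ = P.C2 * ‖b - a‖ * |s - τ| := by ring
  -- the trajectory is (C0/m)-Lipschitz
  have traj_lip : ∀ a b : ℝ, ‖x b - x a‖ ≤ (P.C0 / P.m) * |b - a| := by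
    intro a b
    refine lip_of_deriv (φ' := fun s => -(P.hessInv (x s) s (P.dtgrad (x s) s))) hode ?_ a b
    intro s
    rw [norm_neg]
    calc ‖P.hessInv (x s) s (P.dtgrad (x s) s)‖
        ≤ (1 / P.m) * ‖P.dtgrad (x s) s‖ := hInv _ _ _
      _ ≤ (1 / P.m) * P.C0 :=
          mul_le_mul_of_nonneg_left (P.dtgrad_bound _ _) (by positivity)
      _ = P.C0 / P.m := by ring
  -- main slope bound
  refine norm_deriv_le_of_slope_bound hF' ?_
  intro s
  have hxst : ‖x s - x t‖ ≤ (P.C0 / P.m) * |s - t| := traj_lip t s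
  -- bound on the difference of `dtgrad` along the trajectory
  have hgdiff : ‖P.dtgrad (x s) s - P.dtgrad (x t) t‖
      ≤ (P.C3 + P.C2 * (P.C0 / P.m)) * |s - t| := by
    have tri : ‖P.dtgrad (x s) s - P.dtgrad (x t) t‖
        ≤ ‖P.dtgrad (x s) s - P.dtgrad (x s) t‖ + ‖P.dtgrad (x s) t - P.dtgrad (x t) t‖ := by
      have e : P.dtgrad (x s) s - P.dtgrad (x t) t
          = (P.dtgrad (x s) s - P.dtgrad (x s) t) + (P.dtgrad (x s) t - P.dtgrad (x t) t) := by abel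
      rw [e]; exact norm_add_le _ _
    have h1 : ‖P.dtgrad (x s) s - P.dtgrad (x s) t‖ ≤ P.C3 * |s - t| := dtgrad_lip_t (x s) t s
    have h2 : ‖P.dtgrad (x s) t - P.dtgrad (x t) t‖ ≤ P.C2 * ‖x s - x t‖ := dtgrad_lip_x t (x t) (x s)
    have h3 : P.C2 * ‖x s - x t‖ ≤ P.C2 * ((P.C0 / P.m) * |s - t|) :=
      mul_le_mul_of_nonneg_left hxst hC2
    nlinarith [abs_nonneg (s - t)]
  -- bound on the difference of the Hessian along the trajectory
  have hAdiff : ‖P.hess (x t) t - P.hess (x s) s‖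
      ≤ (P.C2 + P.C1 * (P.C0 / P.m)) * |s - t| := by
    have tri : ‖P.hess (x t) t - P.hess (x s) s‖
        ≤ ‖P.hess (x t) t - P.hess (x s) t‖ + ‖P.hess (x s) t - P.hess (x s) s‖ := by
      have e : P.hess (x t) t - P.hess (x s) s
          = (P.hess (x t) t - P.hess (x s) t) + (P.hess (x s) t - P.hess (x s) s) := by abel
      rw [e]; exact norm_add_le _ _
    have h1 : ‖P.hess (x t) t - P.hess (x s) t‖ ≤ P.C1 * ‖x t - x s‖ := hess_lip_x t (x s) (x t)
    have h2 : ‖P.hess (x s) t - P.hess (x s) s‖ ≤ P.C2 * |t - s| := hess_lip_t (x s) s t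
    have h2' : ‖P.hess (x s) t - P.hess (x s) s‖ ≤ P.C2 * |s - t| := by
      rwa [abs_sub_comm] at h2
    have hxts : ‖x t - x s‖ ≤ (P.C0 / P.m) * |s - t| := by
      rw [← norm_neg]; simpa [neg_sub] using hxst
    have h3 : P.C1 * ‖x t - x s‖ ≤ P.C1 * ((P.C0 / P.m) * |s - t|) :=
      mul_le_mul_of_nonneg_left hxts hC1
    nlinarith [abs_nonneg (s - t)]
  -- resolvent identity applied to `dtgrad (x t) t`
  have hAtIt : P.hess (x t) t (P.hessInv (x t) t (P.dtgrad (x t) t)) = P.dtgrad (x t) t := by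
    have h := P.hessInv_right (x t) t
    calc P.hess (x t) t (P.hessInv (x t) t (P.dtgrad (x t) t))
        = ((P.hess (x t) t).comp (P.hessInv (x t) t)) (P.dtgrad (x t) t) := rfl
      _ = P.dtgrad (x t) t := by rw [h]; rfl
  have hIsAs : ∀ u : EuclideanSpace ℝ (Fin n),
      P.hessInv (x s) s (P.hess (x s) s u) = u := by
    intro u
    have h := P.hessInv_left (x s) s
    calc P.hessInv (x s) s (P.hess (x s) s u)
        = ((P.hessInv (x s) s).comp (P.hess (x s) s)) u := rfl
      _ = u := by rw [h]; rfl
  have hkey : P.hessInv (x s) s (P.dtgrad (x t) t) - P.hessInv (x t) t (P.dtgrad (x t) t)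
      = P.hessInv (x s) s ((P.hess (x t) t - P.hess (x s) s) (P.hessInv (x t) t (P.dtgrad (x t) t))) := by
    rw [ContinuousLinearMap.sub_apply, map_sub, hAtIt, hIsAs]
  -- assemble
  have e1 : -(P.hessInv (x s) s (P.dtgrad (x s) s)) - -(P.hessInv (x t) t (P.dtgrad (x t) t))
      = -(P.hessInv (x s) s (P.dtgrad (x s) s - P.dtgrad (x t) t)
          + (P.hessInv (x s) s (P.dtgrad (x t) t) - P.hessInv (x t) t (P.dtgrad (x t) t))) := by
    rw [map_sub]; abel
  rw [e1, norm_neg]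
  have b1 : ‖P.hessInv (x s) s (P.dtgrad (x s) s - P.dtgrad (x t) t)‖
      ≤ (1 / P.m) * ((P.C3 + P.C2 * (P.C0 / P.m)) * |s - t|) :=
    le_trans (hInv _ _ _) (mul_le_mul_of_nonneg_left hgdiff (by positivity))
  have hItgt : ‖P.hessInv (x t) t (P.dtgrad (x t) t)‖ ≤ (1 / P.m) * P.C0 :=
    le_trans (hInv _ _ _) (mul_le_mul_of_nonneg_left (P.dtgrad_bound _ _) (by positivity))
  have hAdiff_nonneg : (0:ℝ) ≤ (P.C2 + P.C1 * (P.C0 / P.m)) * |s - t| :=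
    mul_nonneg (add_nonneg hC2 (mul_nonneg hC1 (div_nonneg hC0 hm.le))) (abs_nonneg _)
  have b2 : ‖P.hessInv (x s) s (P.dtgrad (x t) t) - P.hessInv (x t) t (P.dtgrad (x t) t)‖
      ≤ (1 / P.m) * (((P.C2 + P.C1 * (P.C0 / P.m)) * |s - t|) * ((1 / P.m) * P.C0)) := by
    rw [hkey]
    refine le_trans (hInv _ _ _) (mul_le_mul_of_nonneg_left ?_ (by positivity))
    refine le_trans ((P.hess (x t) t - P.hess (x s) s).le_opNorm _) ?_
    exact mul_le_mul hAdiff hItgt (norm_nonneg _) hAdiff_nonneg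
  have tri := norm_add_le (P.hessInv (x s) s (P.dtgrad (x s) s - P.dtgrad (x t) t))
    (P.hessInv (x s) s (P.dtgrad (x t) t) - P.hessInv (x t) t (P.dtgrad (x t) t))
  have harith : (1 / P.m) * ((P.C3 + P.C2 * (P.C0 / P.m)) * |s - t|)
      + (1 / P.m) * (((P.C2 + P.C1 * (P.C0 / P.m)) * |s - t|) * ((1 / P.m) * P.C0))
      = (P.C0 ^ 2 * P.C1 / P.m ^ 3 + 2 * P.C0 * P.C2 / P.m ^ 2 + P.C3 / P.m) * |s - t| := by
    field_simp
    ring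
  linarith [tri, b1, b2]
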